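/- For any integer q ≥ 3, any even integer d, and any integer k ≥ 1 with k(q-1)^{k-1} ≤ d, we have χ(T_q, d) ≤ (q-1)^k + (q-1)^{⌊k/2⌋} + d/k + 1. -/

import Mathlib

/-- The exact `d`-th power of a graph `G`: same vertices, adjacency iff the
distance in `G` is exactly `d`. -/
def exactDistGraph {V : Type*} (G : SimpleGraph V) (d : ℕ) : SimpleGraph V where
  Adj u v := u ≠ v ∧ G.dist u v = d
  symm := by
    constructor
    intro u v h
    exact ⟨h.1.symm, by rw [SimpleGraph.dist_comm]; exact h.2⟩
  loopless := by
    constructor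
    intro u h
    exact h.1 rfl

namespace ExactDistProof

open SimpleGraph Function
set_option linter.unusedSectionVars false
attribute [local instance] Classical.propDecidable

variable {V : Type*} {G : SimpleGraph V}

lemma concat_isPath {u v w : V} {p : G.Walk u v} (hp : p.IsPath) (h : G.Adj v w)
    (hv : w ∉ p.support) : (p.concat h).IsPath := by
  classical
  rw [← SimpleGraph.Walk.isPath_reverse_iff, SimpleGraph.Walk.reverse_concat]
  exact hp.reverse.cons (by simpa [SimpleGraph.Walk.support_reverse] using hv)

section Tree

variable (hc : G.Connected) (ha : G.IsAcyclic) (r : V)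

include hc ha in
lemma path_length_eq_dist {u v : V} (p : G.Walk u v) (hp : p.IsPath) :
    p.length = G.dist u v := by
  classical
  obtain ⟨w, hw⟩ := hc.exists_walk_length_eq_dist u v
  have h1 : (⟨p, hp⟩ : G.Path u v) = ⟨w.bypass, w.bypass_isPath⟩ := ha.path_unique _ _
  have h2 : p.length ≤ G.dist u v := by
    have h3 : p.length = w.bypass.length := by
      have := congrArg (fun q : G.Path u v => q.1.length) h1
      simpa using this
    rw [h3, ← hw]
    exact w.length_bypass_le
  exact le_antisymm h2 (SimpleGraph.dist_le p)

include hc ha in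
lemma mem_geodesic_dist {u v y : V} (p : G.Walk u v) (hp : p.IsPath)
    (hy : y ∈ p.support) : G.dist u y + G.dist y v = G.dist u v := by
  classical
  have h1 := path_length_eq_dist hc ha _ (hp.takeUntil hy)
  have h2 := path_length_eq_dist hc ha _ (hp.dropUntil hy)
  have h3 : (p.takeUntil y hy).length + (p.dropUntil y hy).length = p.length := by
    rw [← SimpleGraph.Walk.length_append, SimpleGraph.Walk.take_spec]
  rw [h1, h2] at h3
  rw [h3, path_length_eq_dist hc ha p hp]

include hc ha in
lemma adj_ne_level {x y : V} (hxy : G.Adj x y) : G.dist r x ≠ G.dist r y := by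
  classical
  intro he
  obtain ⟨w, hw⟩ := hc.exists_walk_length_eq_dist r x
  have hp : w.bypass.IsPath := w.bypass_isPath
  have hpl : w.bypass.length = G.dist r x := path_length_eq_dist hc ha _ hp
  have hy : y ∉ w.bypass.support := by
    intro hy
    have h1 := mem_geodesic_dist hc ha _ hp hy
    have h4 : G.dist y x = 0 := by omega
    have h5 : y = x := (hc.dist_eq_zero_iff).mp h4
    exact G.irrefl (h5 ▸ hxy.symm)
  have hq : (w.bypass.concat hxy).IsPath := concat_isPath hp hxy hy
  have := path_length_eq_dist hc ha _ hq
  rw [SimpleGraph.Walk.length_concat, hpl] at this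
  omega

include hc in
lemma exists_parent {v : V} (hv : v ≠ r) :
    ∃ x, G.Adj v x ∧ G.dist r x + 1 = G.dist r v := by
  classical
  obtain ⟨w, hw⟩ := hc.exists_walk_length_eq_dist v r
  cases w with
  | nil => exact absurd rfl hv
  | @cons _ x _ h w' =>
    refine ⟨x, h, ?_⟩
    have h1 : G.dist x r ≤ w'.length := SimpleGraph.dist_le w'
    have h2 : G.dist v r ≤ G.dist v x + G.dist x r := hc.dist_triangle
    have h3 : G.dist v x ≤ 1 := by
      have := SimpleGraph.dist_le (SimpleGraph.Walk.cons h SimpleGraph.Walk.nil)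
      simpa using this
    have hl : w'.length + 1 = G.dist v r := by
      simpa [SimpleGraph.Walk.length_cons] using hw
    have e1 : G.dist r x = G.dist x r := SimpleGraph.dist_comm ..
    have e2 : G.dist r v = G.dist v r := SimpleGraph.dist_comm ..
    omega

include hc ha in
lemma parent_unique {v x₁ x₂ : V} (h₁ : G.Adj v x₁) (hd₁ : G.dist r x₁ + 1 = G.dist r v)
    (h₂ : G.Adj v x₂) (hd₂ : G.dist r x₂ + 1 = G.dist r v) : x₁ = x₂ := by
  classical
  have build : ∀ (x : V) (hx : G.Adj v x), G.dist r x + 1 = G.dist r v →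
      ∃ (p : G.Walk r v) (_ : p.IsPath) (t : G.Walk r x), p = t.concat hx.symm := by
    intro x hx hdx
    obtain ⟨w, hw⟩ := hc.exists_walk_length_eq_dist r x
    have hp : w.bypass.IsPath := w.bypass_isPath
    have hv : v ∉ w.bypass.support := by
      intro hv
      have h1 := mem_geodesic_dist hc ha _ hp hv
      have h2 : G.dist v x ≤ 1 := by
        have := SimpleGraph.dist_le (SimpleGraph.Walk.cons hx SimpleGraph.Walk.nil)
        simpa using this
      have h3 : G.dist v x ≠ 0 := by
        intro h0
        have : v = x := (hc.dist_eq_zero_iff).mp h0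
        exact G.irrefl (this ▸ hx)
      have h4 : w.bypass.length = G.dist r x := path_length_eq_dist hc ha _ hp
      omega
    exact ⟨w.bypass.concat hx.symm, concat_isPath hp hx.symm hv, w.bypass, rfl⟩
  obtain ⟨p₁, hp₁, t₁, he₁⟩ := build x₁ h₁ hd₁
  obtain ⟨p₂, hp₂, t₂, he₂⟩ := build x₂ h₂ hd₂
  have heq : (⟨p₁, hp₁⟩ : G.Path r v) = ⟨p₂, hp₂⟩ := ha.path_unique _ _
  have hpe : p₁ = p₂ := congrArg Subtype.val heq
  have hr₁ : p₁.reverse = SimpleGraph.Walk.cons h₁ t₁.reverse := by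
    rw [he₁]; exact SimpleGraph.Walk.reverse_concat _ _
  have hr₂ : p₂.reverse = SimpleGraph.Walk.cons h₂ t₂.reverse := by
    rw [he₂]; exact SimpleGraph.Walk.reverse_concat _ _
  have hs : p₁.reverse.support = p₂.reverse.support := by rw [hpe]
  rw [hr₁, hr₂] at hs
  simp only [SimpleGraph.Walk.support_cons] at hs
  have hs' : t₁.reverse.support = t₂.reverse.support := by
    simpa using hs
  have hfin : x₁ :: t₁.reverse.support.tail = x₂ :: t₂.reverse.support.tail := by
    rw [← SimpleGraph.Walk.support_eq_cons, ← SimpleGraph.Walk.support_eq_cons]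
    exact hs'
  injection hfin


open scoped Classical in
noncomputable def par (v : V) : V :=
  if hv : v = r then r else Classical.choose (exists_parent hc r hv)

lemma par_r : par hc r r = r := dif_pos rfl

lemma par_spec {v : V} (hv : v ≠ r) :
    G.Adj v (par hc r v) ∧ G.dist r (par hc r v) + 1 = G.dist r v := by
  rw [par, dif_neg hv]; exact Classical.choose_spec (exists_parent hc r hv)

include hc in
lemma eq_r_of_lev {v : V} (h : G.dist r v = 0) : v = r :=
  ((hc.dist_eq_zero_iff).mp h).symm

include ha in
lemma par_eq_of {v x : V} (hx : G.Adj v x) (hd : G.dist r x + 1 = G.dist r v) :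
    par hc r v = x := by
  have hv : v ≠ r := by
    intro h; subst h
    rw [SimpleGraph.dist_self] at hd; omega
  exact parent_unique hc ha r (par_spec hc r hv).1 (par_spec hc r hv).2 hx hd

include ha in
lemma adj_cases {x y : V} (h : G.Adj x y) :
    (par hc r y = x ∧ G.dist r x + 1 = G.dist r y) ∨
    (par hc r x = y ∧ G.dist r y + 1 = G.dist r x) := by
  have hne := adj_ne_level hc ha r h
  have hd1 : G.dist x y ≤ 1 := by
    have := SimpleGraph.dist_le (SimpleGraph.Walk.cons h SimpleGraph.Walk.nil)
    simpa using this
  have ht1 : G.dist r y ≤ G.dist r x + G.dist x y := hc.dist_triangle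
  have ht2 : G.dist r x ≤ G.dist r y + G.dist y x := hc.dist_triangle
  have hcm : G.dist y x = G.dist x y := SimpleGraph.dist_comm ..
  rcases lt_or_gt_of_ne hne with hlt | hlt
  · exact Or.inl ⟨par_eq_of hc ha r h.symm (by omega), by omega⟩
  · exact Or.inr ⟨par_eq_of hc ha r h (by omega), by omega⟩

noncomputable def anc (v : V) (j : ℕ) : V := (par hc r)^[j] v

lemma anc_zero (v : V) : anc hc r v 0 = v := rfl

lemma anc_succ (v : V) (j : ℕ) : anc hc r v (j + 1) = anc hc r (par hc r v) j := by
  simp [anc, Function.iterate_succ_apply]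

lemma anc_succ' (v : V) (j : ℕ) : anc hc r v (j + 1) = par hc r (anc hc r v j) := by
  simp [anc, Function.iterate_succ_apply']

lemma anc_add (v : V) (i j : ℕ) : anc hc r v (i + j) = anc hc r (anc hc r v j) i := by
  simp [anc, Function.iterate_add_apply]

include ha in
lemma lev_anc {v : V} : ∀ {j : ℕ}, j ≤ G.dist r v → G.dist r (anc hc r v j) + j = G.dist r v := by
  intro j
  induction j with
  | zero => intro _; simp [anc_zero]
  | succ n ih =>
    intro hle
    have h1 := ih (by omega)
    have hne : anc hc r v n ≠ r := by
      intro he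
      rw [he, SimpleGraph.dist_self] at h1; omega
    have h2 := (par_spec hc r hne).2
    rw [anc_succ']
    omega

include ha in
lemma anc_ne_r {v : V} {j : ℕ} (hj : j < G.dist r v) : anc hc r v j ≠ r := by
  intro he
  have := lev_anc hc ha r (v := v) (j := j) (by omega)
  rw [he, SimpleGraph.dist_self] at this; omega

include ha in
lemma anc_full {v : V} : anc hc r v (G.dist r v) = r := by
  have := lev_anc hc ha r (v := v) (j := G.dist r v) le_rfl
  exact eq_r_of_lev hc r (by omega)

include ha in
lemma dist_anc {v : V} : ∀ {j : ℕ}, j ≤ G.dist r v → G.dist v (anc hc r v j) = j := by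
  have hub : ∀ {j : ℕ}, j ≤ G.dist r v → G.dist v (anc hc r v j) ≤ j := by
    intro j
    induction j with
    | zero => intro _; simp [anc_zero, SimpleGraph.dist_self]
    | succ n ih =>
      intro hle
      have h1 := ih (by omega)
      have hne : anc hc r v n ≠ r := anc_ne_r hc ha r (by omega)
      have hadj : G.Adj (anc hc r v n) (anc hc r v (n + 1)) := by
        rw [anc_succ']; exact (par_spec hc r hne).1
      have h2 : G.dist (anc hc r v n) (anc hc r v (n + 1)) ≤ 1 := by
        have := SimpleGraph.dist_le (SimpleGraph.Walk.cons hadj SimpleGraph.Walk.nil)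
        simpa using this
      have h3 := hc.dist_triangle (u := v) (v := anc hc r v n) (w := anc hc r v (n + 1))
      omega
  intro j hj
  have h1 := hub hj
  have h2 := lev_anc hc ha r (v := v) hj
  have h3 := hc.dist_triangle (u := r) (v := anc hc r v j) (w := v)
  have h4 : G.dist (anc hc r v j) v = G.dist v (anc hc r v j) := SimpleGraph.dist_comm ..
  omega

noncomputable def mlev (u v : V) : ℕ :=
  Nat.findGreatest (fun g => anc hc r u (G.dist r u - g) = anc hc r v (G.dist r v - g))
    (min (G.dist r u) (G.dist r v))

include ha in
lemma mlev_le (u v : V) : mlev hc r u v ≤ min (G.dist r u) (G.dist r v) := by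
  unfold mlev
  exact Nat.findGreatest_le _

include ha in
lemma mlev_spec (u v : V) :
    anc hc r u (G.dist r u - mlev hc r u v) = anc hc r v (G.dist r v - mlev hc r u v) := by
  have h0 : anc hc r u (G.dist r u - 0) = anc hc r v (G.dist r v - 0) := by
    simp [anc_full hc ha r]
  unfold mlev
  exact Nat.findGreatest_spec
    (P := fun g => anc hc r u (G.dist r u - g) = anc hc r v (G.dist r v - g))
    (Nat.zero_le _) h0

include ha in
lemma mlev_max {u v : V} {g' : ℕ} (h1 : mlev hc r u v < g')
    (h2 : g' ≤ min (G.dist r u) (G.dist r v)) :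
    anc hc r u (G.dist r u - g') ≠ anc hc r v (G.dist r v - g') := by
  unfold mlev at h1
  exact Nat.findGreatest_is_greatest
    (P := fun g => anc hc r u (G.dist r u - g) = anc hc r v (G.dist r v - g)) h1 h2

include ha in
lemma mlev_chain (u v : V) (j : ℕ) :
    anc hc r u ((G.dist r u - mlev hc r u v) + j) =
    anc hc r v ((G.dist r v - mlev hc r u v) + j) := by
  induction j with
  | zero => simpa using mlev_spec hc ha r u v
  | succ n ih =>
    have e1 : G.dist r u - mlev hc r u v + (n + 1) = (G.dist r u - mlev hc r u v + n) + 1 := by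
      omega
    have e2 : G.dist r v - mlev hc r u v + (n + 1) = (G.dist r v - mlev hc r u v + n) + 1 := by
      omega
    rw [e1, e2, anc_succ', anc_succ', ih]

def IsDesc (x y : V) : Prop :=
  G.dist r x ≤ G.dist r y ∧ anc hc r y (G.dist r y - G.dist r x) = x

include ha in
lemma cross {u₁ : V} (hne : u₁ ≠ r) {x y : V} (W : G.Walk x y)
    (hx : IsDesc hc r u₁ x) (hy : ¬ IsDesc hc r u₁ y) : par hc r u₁ ∈ W.support := by
  induction W with
  | nil => exact absurd hx hy
  | @cons a b c h W ih =>
    by_cases hz : IsDesc hc r u₁ b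
    · rw [SimpleGraph.Walk.support_cons]
      exact List.mem_cons_of_mem _ (ih hz hy)
    · rcases adj_cases hc ha r h with ⟨hp, hd⟩ | ⟨hp, hd⟩
      · -- par b = a : b is child of a, so b is a descendant: contra
        exfalso
        apply hz
        have hx1 := hx.1
        refine ⟨by omega, ?_⟩
        have hj : G.dist r b - G.dist r u₁ = (G.dist r a - G.dist r u₁) + 1 := by
          omega
        rw [hj, anc_succ, hp]
        exact hx.2
      · -- par a = b
        by_cases hau : a = u₁
        · subst hau
          rw [SimpleGraph.Walk.support_cons]
          refine List.mem_cons_of_mem _ ?_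
          rw [hp]
          exact SimpleGraph.Walk.start_mem_support W
        · exfalso
          apply hz
          have hlt : G.dist r u₁ < G.dist r a := by
            rcases lt_or_eq_of_le hx.1 with h' | h'
            · exact h'
            · exfalso; apply hau
              have h2 := hx.2
              rw [h'] at h2
              simpa [anc_zero] using h2
          refine ⟨by omega, ?_⟩
          have hj : G.dist r a - G.dist r u₁ = (G.dist r b - G.dist r u₁) + 1 := by omega
          have := hx.2
          rw [hj, anc_succ, hp] at this
          exact this

include ha in
lemma dist_meet (u v : V) :
    G.dist u v = (G.dist r u - mlev hc r u v) + (G.dist r v - mlev hc r u v) := by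
  classical
  set g := mlev hc r u v with hg
  have hgle := mlev_le hc ha r u v
  set w := anc hc r u (G.dist r u - g) with hw
  obtain ⟨W0, hW0⟩ := hc.exists_walk_length_eq_dist u v
  have hp : W0.bypass.IsPath := W0.bypass_isPath
  have hwmem : w ∈ W0.bypass.support := by
    by_cases hgu : g = G.dist r u
    · have : w = u := by rw [hw, hgu]; simp [anc_zero]
      rw [this]; exact SimpleGraph.Walk.start_mem_support _
    · have hglt : g < G.dist r u := by omega
      set u₁ := anc hc r u (G.dist r u - g - 1) with hu₁
      have hlevu₁ : G.dist r u₁ + (G.dist r u - g - 1) = G.dist r u :=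
        lev_anc hc ha r (by omega)
      have hlu₁ : G.dist r u₁ = g + 1 := by omega
      have hne : u₁ ≠ r := by
        intro he; rw [he, SimpleGraph.dist_self] at hlu₁; omega
      have hxu : IsDesc hc r u₁ u := by
        refine ⟨by omega, ?_⟩
        rw [hlu₁, ← Nat.sub_sub]
      have hyv : ¬ IsDesc hc r u₁ v := by
        intro hd
        have h1 := hd.1
        rw [hlu₁] at h1
        have hgv : g + 1 ≤ G.dist r v := h1
        have h2 := hd.2
        rw [hlu₁] at h2
        apply mlev_max hc ha r (u := u) (v := v) (g' := g + 1) (by omega) (by omega)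
        rw [h2, ← Nat.sub_sub]
      have hcr := cross hc ha r hne W0.bypass hxu hyv
      have hpar : par hc r u₁ = w := by
        have h1 : G.dist r u - g = (G.dist r u - g - 1) + 1 := by omega
        rw [hw, h1, anc_succ']
      rw [← hpar]; exact hcr
  have hsplit := mem_geodesic_dist hc ha W0.bypass hp hwmem
  have hd1 : G.dist u w = G.dist r u - g := dist_anc hc ha r (by omega)
  have hd2 : G.dist w v = G.dist r v - g := by
    have : w = anc hc r v (G.dist r v - g) := mlev_spec hc ha r u v
    rw [this, SimpleGraph.dist_comm]
    exact dist_anc hc ha r (by omega)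
  omega

end Tree

section Construction

variable (hc : G.Connected) (ha : G.IsAcyclic) (r : V)
variable (Q k s t N : ℕ) (hQ : 0 < Q) (hNpos : 0 < N)
variable (ι : ∀ x : V, (G.neighborSet x) ≃ Fin (Q + 1)) (c₀ : V)

noncomputable def idx (x v : V) : Fin (Q + 1) :=
  if hm : v ∈ G.neighborSet x then ι x ⟨v, hm⟩ else 0

noncomputable def excl (p : V) : Fin (Q + 1) :=
  if p = r then idx Q ι r c₀ else idx Q ι p (par hc r p)

noncomputable def lab (v : V) : Fin Q :=
  ((finSuccEquiv' (excl hc r Q ι c₀ (par hc r v))) (idx Q ι (par hc r v) v)).getD ⟨0, hQ⟩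

include ha in
lemma lab_ne (hc₀ : G.Adj r c₀) {x y : V} (hx : x ≠ r) (hy : y ≠ r) (hxy : x ≠ y)
    (hp : par hc r x = par hc r y)
    (hroot : par hc r x = r → (x ≠ c₀ ∧ y ≠ c₀)) :
    lab hc r Q hQ ι c₀ x ≠ lab hc r Q hQ ι c₀ y := by
  classical
  have hmx : x ∈ G.neighborSet (par hc r x) := (par_spec hc r hx).1.symm
  have hmy : y ∈ G.neighborSet (par hc r x) := by
    rw [hp]; exact (par_spec hc r hy).1.symm
  have hidx : idx Q ι (par hc r x) x = ι (par hc r x) ⟨x, hmx⟩ := dif_pos hmx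
  have hidy : idx Q ι (par hc r x) y = ι (par hc r x) ⟨y, hmy⟩ := dif_pos hmy
  have hxyv : idx Q ι (par hc r x) x ≠ idx Q ι (par hc r x) y := by
    rw [hidx, hidy]
    intro h
    exact hxy (Subtype.ext_iff.mp ((ι (par hc r x)).injective h))
  have hlevx : G.dist r (par hc r x) + 1 = G.dist r x := (par_spec hc r hx).2
  have hlevy : G.dist r (par hc r x) + 1 = G.dist r y := by
    rw [hp]; exact (par_spec hc r hy).2
  have idx_inj : ∀ (p a b : V), a ∈ G.neighborSet p → b ∈ G.neighborSet p →
      idx Q ι p a = idx Q ι p b → a = b := by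
    intro p a b hma hmb h
    rw [idx, dif_pos hma, idx, dif_pos hmb] at h
    exact Subtype.ext_iff.mp ((ι p).injective h)
  have hexcl : ∀ w : V, w ∈ G.neighborSet (par hc r x) →
      G.dist r (par hc r x) + 1 = G.dist r w →
      (par hc r x = r → w ≠ c₀) → idx Q ι (par hc r x) w ≠ excl hc r Q ι c₀ (par hc r x) := by
    intro w hmw hlevw hwc
    by_cases hpr : par hc r x = r
    · rw [excl, if_pos hpr, hpr]
      rw [hpr] at hmw
      have hmc : c₀ ∈ G.neighborSet r := hc₀
      intro h
      exact (hwc hpr) (idx_inj r w c₀ hmw hmc h)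
    · rw [excl, if_neg hpr]
      have hmpp : par hc r (par hc r x) ∈ G.neighborSet (par hc r x) :=
        (par_spec hc r hpr).1
      intro h
      have hwp : w = par hc r (par hc r x) := idx_inj _ w _ hmw hmpp h
      have h2 := (par_spec hc r hpr).2
      rw [← hwp] at h2
      omega
  have hex : idx Q ι (par hc r x) x ≠ excl hc r Q ι c₀ (par hc r x) :=
    hexcl x hmx hlevx (fun h => (hroot h).1)
  have hey : idx Q ι (par hc r x) y ≠ excl hc r Q ι c₀ (par hc r x) :=
    hexcl y hmy hlevy (fun h => (hroot h).2)
  have key : ∀ a : Fin (Q+1), a ≠ excl hc r Q ι c₀ (par hc r x) →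
      ∃ j : Fin Q, (finSuccEquiv' (excl hc r Q ι c₀ (par hc r x))) a = some j := by
    intro a haa
    cases hfa : (finSuccEquiv' (excl hc r Q ι c₀ (par hc r x))) a with
    | none =>
      exfalso
      apply haa
      apply (finSuccEquiv' (excl hc r Q ι c₀ (par hc r x))).injective
      rw [hfa, finSuccEquiv'_at]
    | some j => exact ⟨j, rfl⟩
  obtain ⟨jx, hjx⟩ := key _ hex
  obtain ⟨jy, hjy⟩ := key _ hey
  have hjne : jx ≠ jy := by
    intro h
    apply hxyv
    apply (finSuccEquiv' (excl hc r Q ι c₀ (par hc r x))).injective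
    rw [hjx, hjy, h]
  unfold lab
  rw [← hp, hjx, hjy]
  simpa using hjne

noncomputable def alab (v : V) (z : ℤ) : Fin Q :=
  if h : 1 ≤ z ∧ z ≤ (G.dist r v : ℤ) then
    lab hc r Q hQ ι c₀ (anc hc r v (G.dist r v - z.toNat))
  else ⟨0, hQ⟩

include ha in
lemma alab_eq_of_le_meet {u v : V} {z : ℤ} (hz : z ≤ (mlev hc r u v : ℤ)) :
    alab hc r Q hQ ι c₀ u z = alab hc r Q hQ ι c₀ v z := by
  have hle := mlev_le hc ha r u v
  by_cases h1 : 1 ≤ z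
  · have hzu : z ≤ (G.dist r u : ℤ) := by
      have : (mlev hc r u v : ℤ) ≤ (G.dist r u : ℤ) := by
        have := mlev_le hc ha r u v
        push_cast
        omega
      omega
    have hzv : z ≤ (G.dist r v : ℤ) := by
      have : (mlev hc r u v : ℤ) ≤ (G.dist r v : ℤ) := by
        have := mlev_le hc ha r u v
        push_cast
        omega
      omega
    unfold alab
    rw [dif_pos ⟨h1, hzu⟩, dif_pos ⟨h1, hzv⟩]
    congr 1
    have hchain := mlev_chain hc ha r u v (mlev hc r u v - z.toNat)
    have e1 : G.dist r u - mlev hc r u v + (mlev hc r u v - z.toNat)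
        = G.dist r u - z.toNat := by omega
    have e2 : G.dist r v - mlev hc r u v + (mlev hc r u v - z.toNat)
        = G.dist r v - z.toNat := by omega
    rw [e1, e2] at hchain
    exact hchain
  · unfold alab
    rw [dif_neg (by omega), dif_neg (by omega)]

def wrd (m : ℕ) (α : ℤ → Fin Q) : Fin k → Fin Q :=
  fun i => α ((k * m : ℕ) - (s : ℤ) + 1 + (i : ℤ))

noncomputable def override (m' : ℕ) (α : ℤ → Fin Q) (f : Fin (k - (k+1)/2) → Fin Q) :
    ℤ → Fin Q :=
  fun z =>
    if h : ((k * m' : ℕ) - (s : ℤ) + ((k+1)/2 : ℕ) + 1 ≤ z ∧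
            z ≤ ((k * m' : ℕ) : ℤ) - (s : ℤ) + (k : ℤ)) then
      f ⟨(z - (((k * m' : ℕ) : ℤ) - (s : ℤ) + ((k+1)/2 : ℕ) + 1)).toNat, by omega⟩
    else α z

noncomputable def rankw (w : Fin k → Fin Q) : ℕ := (Fintype.equivFin (Fin k → Fin Q) w).1

lemma rankw_lt (w : Fin k → Fin Q) : rankw Q k w < Q ^ k := by
  have h := (Fintype.equivFin (Fin k → Fin Q) w).2
  simpa [rankw, Fintype.card_fun] using h

lemma rankw_inj {w w' : Fin k → Fin Q} (h : rankw Q k w = rankw Q k w') : w = w' :=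
  (Fintype.equivFin (Fin k → Fin Q)).injective (Fin.ext h)

noncomputable def pick (w : Fin k → Fin Q) (forb : Finset (Fin N)) : Fin N :=
  if h : rankw Q k w < ((Finset.univ \ forb).sort (· ≤ ·)).length then
    ((Finset.univ \ forb).sort (· ≤ ·)).get ⟨rankw Q k w, h⟩
  else ⟨0, hNpos⟩

lemma pick_lt {forb : Finset (Fin N)} (hcard : forb.card + Q ^ k ≤ N) (w : Fin k → Fin Q) :
    rankw Q k w < ((Finset.univ \ forb).sort (· ≤ ·)).length := by
  rw [Finset.length_sort, Finset.card_sdiff_of_subset (Finset.subset_univ _), Finset.card_univ,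
    Fintype.card_fin]
  have := rankw_lt Q k w
  omega

lemma pick_not_mem {forb : Finset (Fin N)} (hcard : forb.card + Q ^ k ≤ N)
    (w : Fin k → Fin Q) : pick Q k N hNpos w forb ∉ forb := by
  rw [pick, dif_pos (pick_lt Q k N hcard w)]
  have hmem : ((Finset.univ \ forb).sort (· ≤ ·)).get ⟨rankw Q k w, pick_lt Q k N hcard w⟩
      ∈ (Finset.univ \ forb) := by
    rw [← Finset.mem_sort (· ≤ ·)]
    exact List.get_mem _ _
  exact fun hmem2 => ((Finset.mem_sdiff.mp hmem).2 hmem2)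

lemma pick_inj {forb : Finset (Fin N)} (hcard : forb.card + Q ^ k ≤ N)
    {w w' : Fin k → Fin Q} (hw : w ≠ w') :
    pick Q k N hNpos w forb ≠ pick Q k N hNpos w' forb := by
  rw [pick, dif_pos (pick_lt Q k N hcard w), pick, dif_pos (pick_lt Q k N hcard w')]
  intro h
  apply hw
  have hnd := Finset.sort_nodup (Finset.univ \ forb) (· ≤ ·)
  have h2 := congrArg Fin.val ((List.Nodup.get_inj_iff hnd).mp h)
  exact rankw_inj Q k h2


noncomputable def col : ℕ → (ℤ → Fin Q) → Fin N
  | m, α =>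
    pick Q k N hNpos (wrd Q k s m α)
      ((((Finset.Icc 2 (t+1)).filter (fun Δ => Δ ≤ m)).attach.image
          (fun Δ => col (m - Δ.1) α)) ∪
       ((Finset.univ : Finset (Fin (k - (k+1)/2) → Fin Q)).image
          (fun f => if hm : 1 ≤ m then col (m - 1) (override Q k s N (m-1) α f)
                    else ⟨0, hNpos⟩)) ∪
       {⟨0, hNpos⟩})
  termination_by m _ => m
  decreasing_by
  · have h2 := Δ.2
    simp only [Finset.mem_filter, Finset.mem_Icc] at h2
    omega
  · omega

noncomputable def forbOf (m : ℕ) (α : ℤ → Fin Q) : Finset (Fin N) :=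
  (((Finset.Icc 2 (t+1)).filter (fun Δ => Δ ≤ m)).attach.image
      (fun Δ => col Q k s t N hNpos (m - Δ.1) α)) ∪
  ((Finset.univ : Finset (Fin (k - (k+1)/2) → Fin Q)).image
      (fun f => if hm : 1 ≤ m then col Q k s t N hNpos (m - 1) (override Q k s N (m-1) α f)
                else ⟨0, hNpos⟩)) ∪
  {⟨0, hNpos⟩}

lemma col_eq (m : ℕ) (α : ℤ → Fin Q) :
    col Q k s t N hNpos m α
      = pick Q k N hNpos (wrd Q k s m α) (forbOf Q k s t N hNpos m α) := by
  rw [col, forbOf]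

lemma forb_card (hN : Q ^ k + Q ^ (k/2) + t + 1 = N) (m : ℕ) (α : ℤ → Fin Q) :
    (forbOf Q k s t N hNpos m α).card + Q ^ k ≤ N := by
  have h1 : (((Finset.Icc 2 (t+1)).filter (fun Δ => Δ ≤ m)).attach.image
      (fun Δ => col Q k s t N hNpos (m - Δ.1) α)).card ≤ t := by
    calc _ ≤ (((Finset.Icc 2 (t+1)).filter (fun Δ => Δ ≤ m)).attach).card :=
            Finset.card_image_le
    _ = ((Finset.Icc 2 (t+1)).filter (fun Δ => Δ ≤ m)).card := Finset.card_attach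
    _ ≤ (Finset.Icc 2 (t+1)).card := Finset.card_filter_le _ _
    _ = t := by rw [Nat.card_Icc]; omega
  have h2 : (((Finset.univ : Finset (Fin (k - (k+1)/2) → Fin Q)).image
      (fun f => if hm : 1 ≤ m then col Q k s t N hNpos (m - 1) (override Q k s N (m-1) α f)
                else ⟨0, hNpos⟩))).card ≤ Q ^ (k/2) := by
    calc _ ≤ (Finset.univ : Finset (Fin (k - (k+1)/2) → Fin Q)).card :=
            Finset.card_image_le
    _ = Q ^ (k - (k+1)/2) := by
          rw [Finset.card_univ, Fintype.card_fun, Fintype.card_fin, Fintype.card_fin]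
    _ = Q ^ (k/2) := by congr 1; omega
  have h3 := Finset.card_union_le
    ((((Finset.Icc 2 (t+1)).filter (fun Δ => Δ ≤ m)).attach.image
      (fun Δ => col Q k s t N hNpos (m - Δ.1) α)) ∪
     (((Finset.univ : Finset (Fin (k - (k+1)/2) → Fin Q)).image
      (fun f => if hm : 1 ≤ m then col Q k s t N hNpos (m - 1) (override Q k s N (m-1) α f)
                else ⟨0, hNpos⟩))))
    ({⟨0, hNpos⟩} : Finset (Fin N))
  have h4 := Finset.card_union_le
    ((((Finset.Icc 2 (t+1)).filter (fun Δ => Δ ≤ m)).attach.image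
      (fun Δ => col Q k s t N hNpos (m - Δ.1) α)))
    (((Finset.univ : Finset (Fin (k - (k+1)/2) → Fin Q)).image
      (fun f => if hm : 1 ≤ m then col Q k s t N hNpos (m - 1) (override Q k s N (m-1) α f)
                else ⟨0, hNpos⟩)))
  rw [forbOf]
  have h5 : ({⟨0, hNpos⟩} : Finset (Fin N)).card = 1 := Finset.card_singleton _
  omega

lemma col_read : ∀ (m : ℕ) {α α' : ℤ → Fin Q},
    (∀ z : ℤ, z ≤ ((k*m : ℕ) : ℤ) - (s:ℤ) + (k:ℤ) → α z = α' z) →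
    col Q k s t N hNpos m α = col Q k s t N hNpos m α' := by
  intro m
  induction m using Nat.strong_induction_on with
  | _ m ih =>
    intro α α' hag
    rw [col_eq, col_eq]
    have hw : wrd Q k s m α = wrd Q k s m α' := by
      funext i
      apply hag
      have hik : (i : ℤ) < (k : ℤ) := by exact_mod_cast i.2
      omega
    have hf : forbOf Q k s t N hNpos m α = forbOf Q k s t N hNpos m α' := by
      unfold forbOf
      congr 1
      congr 1
      · apply Finset.image_congr
        intro Δ hΔ
        have h2 := Δ.2
        simp only [Finset.mem_filter, Finset.mem_Icc] at h2
        apply ih (m - Δ.1) (by omega)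
        intro z hz
        apply hag
        have e1 : k * (m - Δ.1) + k * Δ.1 = k * m := by
          rw [← Nat.mul_add]; congr 1; omega
        have e2 : ((k * (m - Δ.1) : ℕ) : ℤ) + ((k * Δ.1 : ℕ) : ℤ) = ((k*m : ℕ) : ℤ) := by
          exact_mod_cast congrArg (fun n : ℕ => (n : ℤ)) e1
        have e3 : ((k * Δ.1 : ℕ) : ℤ) ≥ 2 * (k : ℤ) := by
          have : k * 2 ≤ k * Δ.1 := Nat.mul_le_mul_left _ (by omega)
          push_cast
          omega
        omega
      · apply Finset.image_congr
        intro f _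
        simp only
        by_cases hm : 1 ≤ m
        · rw [dif_pos hm, dif_pos hm]
          apply ih (m-1) (by omega)
          intro z hz
          unfold override
          by_cases hwin : (((k * (m-1) : ℕ) : ℤ) - (s : ℤ) + (((k+1)/2 : ℕ) : ℤ) + 1 ≤ z ∧
              z ≤ ((k * (m-1) : ℕ) : ℤ) - (s : ℤ) + (k : ℤ))
          · rw [dif_pos hwin, dif_pos hwin]
          · rw [dif_neg hwin, dif_neg hwin]
            apply hag
            have e1 : k * (m - 1) + k * 1 = k * m := by
              rw [← Nat.mul_add]; congr 1; omega
            have e2 : ((k * (m - 1) : ℕ) : ℤ) + (k : ℤ) = ((k*m : ℕ) : ℤ) := by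
              exact_mod_cast congrArg (fun n : ℕ => (n : ℤ)) (by
                have h9 : k * (m-1) + k = k * ((m-1)+1) := by ring
                rw [h9, Nat.sub_add_cancel hm] : k * (m-1) + k = k * m)
            omega
        · rw [dif_neg hm, dif_neg hm]
    rw [hw, hf]

lemma forb_read (m : ℕ) {α α' : ℤ → Fin Q}
    (hag : ∀ z : ℤ, z ≤ ((k*m : ℕ) : ℤ) - (s:ℤ) → α z = α' z) :
    forbOf Q k s t N hNpos m α = forbOf Q k s t N hNpos m α' := by
  unfold forbOf
  congr 1
  congr 1
  · apply Finset.image_congr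
    intro Δ hΔ
    have h2 := Δ.2
    simp only [Finset.mem_filter, Finset.mem_Icc] at h2
    apply col_read
    intro z hz
    apply hag
    have e2 : ((k * (m - Δ.1) : ℕ) : ℤ) + ((k * Δ.1 : ℕ) : ℤ) = ((k*m : ℕ) : ℤ) := by
      exact_mod_cast congrArg (fun n : ℕ => (n : ℤ))
        (by rw [← Nat.mul_add]; congr 1; omega : k * (m - Δ.1) + k * Δ.1 = k * m)
    have e3 : ((k * Δ.1 : ℕ) : ℤ) ≥ 2 * (k : ℤ) := by
      have : k * 2 ≤ k * Δ.1 := Nat.mul_le_mul_left _ (by omega)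
      push_cast
      omega
    omega
  · apply Finset.image_congr
    intro f _
    simp only
    by_cases hm : 1 ≤ m
    · rw [dif_pos hm, dif_pos hm]
      apply col_read
      intro z hz
      unfold override
      by_cases hwin : (((k * (m-1) : ℕ) : ℤ) - (s : ℤ) + (((k+1)/2 : ℕ) : ℤ) + 1 ≤ z ∧
          z ≤ ((k * (m-1) : ℕ) : ℤ) - (s : ℤ) + (k : ℤ))
      · rw [dif_pos hwin, dif_pos hwin]
      · rw [dif_neg hwin, dif_neg hwin]
        apply hag
        have e2 : ((k * (m - 1) : ℕ) : ℤ) + (k : ℤ) = ((k*m : ℕ) : ℤ) := by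
          exact_mod_cast congrArg (fun n : ℕ => (n : ℤ)) (by
                have h9 : k * (m-1) + k = k * ((m-1)+1) := by ring
                rw [h9, Nat.sub_add_cancel hm] : k * (m-1) + k = k * m)
        omega
    · rw [dif_neg hm, dif_neg hm]

def deep (v : V) : Prop :=
  s ≤ G.dist r v ∧ ¬(G.dist r v = s ∧ anc hc r v (s-1) = c₀)

open scoped Classical in
noncomputable def colr (v : V) : Fin N :=
  if deep hc r s c₀ v then
    col Q k s t N hNpos (G.dist r v / k) (alab hc r Q hQ ι c₀ v)
  else ⟨0, hNpos⟩

lemma col_ne_zero (hN : Q ^ k + Q ^ (k/2) + t + 1 = N) (m : ℕ) (α : ℤ → Fin Q) :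
    col Q k s t N hNpos m α ≠ ⟨0, hNpos⟩ := by
  rw [col_eq]
  intro h
  have h0 : (⟨0,hNpos⟩ : Fin N) ∈ forbOf Q k s t N hNpos m α := by
    unfold forbOf
    exact Finset.mem_union_right _ (Finset.mem_singleton_self _)
  have h1 := pick_not_mem Q k N hNpos (forb_card Q k s t N hNpos hN m α) (wrd Q k s m α)
  rw [h] at h1
  exact h1 h0

include ha in
lemma main_core (hc₀ : G.Adj r c₀) (hk : 1 ≤ k) (hs1 : 1 ≤ s) (hkd : k < 2*s)
    (ht1 : k*t ≤ 2*s) (ht2 : 2*s < k*t + k) (hN : Q ^ k + Q ^ (k/2) + t + 1 = N)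
    {u v : V} (hne : u ≠ v) (hdist : G.dist u v = 2*s)
    (hlev : G.dist r u ≤ G.dist r v) :
    colr hc r Q k s t N hQ hNpos ι c₀ u ≠ colr hc r Q k s t N hQ hNpos ι c₀ v := by
  classical
  obtain ⟨lu, hlu⟩ : ∃ n, n = G.dist r u := ⟨_, rfl⟩
  obtain ⟨lv, hlv⟩ : ∃ n, n = G.dist r v := ⟨_, rfl⟩
  obtain ⟨g, hg⟩ : ∃ n, n = mlev hc r u v := ⟨_, rfl⟩
  obtain ⟨mu, hmu⟩ : ∃ n, n = lu / k := ⟨_, rfl⟩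
  obtain ⟨mv, hmv⟩ : ∃ n, n = lv / k := ⟨_, rfl⟩
  obtain ⟨ru, hruE⟩ : ∃ n, n = lu % k := ⟨_, rfl⟩
  obtain ⟨rv, hrvE⟩ : ∃ n, n = lv % k := ⟨_, rfl⟩
  have hlev' : lu ≤ lv := by rw [hlu, hlv]; exact hlev
  have hgle := mlev_le hc ha r u v
  rw [← hlu, ← hlv, ← hg] at hgle
  have hgu : g ≤ lu := le_trans hgle (min_le_left _ _)
  have hgv : g ≤ lv := le_trans hgle (min_le_right _ _)
  have hM4 := dist_meet hc ha r u v
  rw [hdist, ← hlu, ← hlv, ← hg] at hM4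
  have hEQ : lu + lv = 2*s + 2*g := by omega
  have hAu : k * mu + ru = lu := by rw [hmu, hruE]; exact Nat.div_add_mod lu k
  have hAv : k * mv + rv = lv := by rw [hmv, hrvE]; exact Nat.div_add_mod lv k
  have hruk : ru < k := by rw [hruE]; exact Nat.mod_lt _ (by omega)
  have hrvk : rv < k := by rw [hrvE]; exact Nat.mod_lt _ (by omega)
  have hmule : mu ≤ mv := by rw [hmu, hmv]; exact Nat.div_le_div_right hlev'
  have hshallow : ∀ w : V, ¬ deep hc r s c₀ w → G.dist r w ≤ s := by
    intro w hw
    by_contra hcon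
    exact hw ⟨by omega, by intro hcc; omega⟩
  have hcolr_deep : ∀ w : V, deep hc r s c₀ w → colr hc r Q k s t N hQ hNpos ι c₀ w
      = col Q k s t N hNpos (G.dist r w / k) (alab hc r Q hQ ι c₀ w) := by
    intro w hw
    rw [colr, if_pos hw]
  by_cases hdu : deep hc r s c₀ u
  · by_cases hdv : deep hc r s c₀ v
    · -- both deep
      have hdu1 : s ≤ lu := by rw [hlu]; exact hdu.1
      have hdv1 : s ≤ lv := by rw [hlv]; exact hdv.1
      have hcolru : colr hc r Q k s t N hQ hNpos ι c₀ u
          = col Q k s t N hNpos mu (alab hc r Q hQ ι c₀ u) := by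
        rw [hcolr_deep u hdu, ← hlu, ← hmu]
      have hcolrv : colr hc r Q k s t N hQ hNpos ι c₀ v
          = col Q k s t N hNpos mv (alab hc r Q hQ ι c₀ v) := by
        rw [hcolr_deep v hdv, ← hlv, ← hmv]
      rw [hcolru, hcolrv]
      rcases Nat.lt_or_ge mu mv with hΔpos | hΔ0
      · -- different blocks
        obtain ⟨Δ, hΔdef⟩ : ∃ n, n = mv - mu := ⟨_, rfl⟩
        have hΔ1 : 1 ≤ Δ := by omega
        have hbr1 : k * mu + k * Δ = k * mv := by
          rw [hΔdef, ← Nat.mul_add]; congr 1; omega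
        have hΔle : Δ ≤ t + 1 := by
          by_contra hcon
          have h1 : k * (t + 2) ≤ k * Δ := Nat.mul_le_mul_left _ (by omega)
          have h2 : k * (t+2) = k*t + 2*k := by ring
          omega
        have hmv1 : 1 ≤ mv := by omega
        have hvne := pick_not_mem Q k N hNpos
          (forb_card Q k s t N hNpos hN mv (alab hc r Q hQ ι c₀ v))
          (wrd Q k s mv (alab hc r Q hQ ι c₀ v))
        intro hcontra
        apply hvne
        rw [← col_eq, ← hcontra]
        rcases Nat.lt_or_ge Δ 2 with hΔeq1 | hΔ2
        · -- Δ = 1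
          have hΔis1 : Δ = 1 := by omega
          have hbrk : k * mu + k = k * mv := by
            rw [← hbr1, hΔis1]; ring
          have hg1 : 2*(k*mu) + 2*((k+1)/2) ≤ 2*s + 2*g := by omega
          set base : ℤ := ((k * mu : ℕ) : ℤ) - (s : ℤ) + (((k+1)/2 : ℕ) : ℤ) + 1 with hbase
          set f₀ : Fin (k - (k+1)/2) → Fin Q :=
            (fun i => alab hc r Q hQ ι c₀ u (base + ((i : ℕ) : ℤ))) with hf₀
          have hmv1' : mv - 1 = mu := by omega
          have hover : col Q k s t N hNpos mu (alab hc r Q hQ ι c₀ u)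
              = col Q k s t N hNpos (mv - 1)
                  (override Q k s N (mv-1) (alab hc r Q hQ ι c₀ v) f₀) := by
            rw [hmv1']
            apply col_read
            intro z hz
            unfold override
            by_cases hwin : (((k * mu : ℕ) : ℤ) - (s : ℤ) + (((k+1)/2 : ℕ) : ℤ) + 1 ≤ z ∧
                z ≤ ((k * mu : ℕ) : ℤ) - (s : ℤ) + (k : ℤ))
            · rw [dif_pos hwin]
              simp only [hf₀]
              congr 1
              have hcoe : (((⟨(z - base).toNat, by omega⟩ : Fin (k - (k+1)/2)) : ℕ) : ℤ)
                  = ((z - base).toNat : ℤ) := rfl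
              rw [hcoe]
              omega
            · rw [dif_neg hwin]
              have hzlt : z ≤ ((k*mu:ℕ):ℤ) - (s:ℤ) + (((k+1)/2:ℕ):ℤ) := by
                by_contra hh
                exact hwin ⟨by omega, by omega⟩
              have hzg : z ≤ ((mlev hc r u v : ℕ) : ℤ) := by rw [← hg]; omega
              exact alab_eq_of_le_meet hc ha r Q hQ ι c₀ hzg
          rw [hover]
          unfold forbOf
          apply Finset.mem_union_left
          apply Finset.mem_union_right
          apply Finset.mem_image.mpr
          refine ⟨f₀, Finset.mem_univ _, ?_⟩
          rw [dif_pos (by omega : 1 ≤ mv)]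
        · -- Δ ≥ 2
          have hbr2 : 2 * k ≤ k * Δ := by
            have h3 : k * 2 ≤ k * Δ := Nat.mul_le_mul_left _ hΔ2
            omega
          have hcolu : col Q k s t N hNpos mu (alab hc r Q hQ ι c₀ u)
              = col Q k s t N hNpos mu (alab hc r Q hQ ι c₀ v) := by
            apply col_read
            intro z hz
            have h2 : 2 * (k*mu + k) ≤ 2*s + 2*g := by omega
            have hzg : z ≤ ((mlev hc r u v : ℕ) : ℤ) := by rw [← hg]; omega
            exact alab_eq_of_le_meet hc ha r Q hQ ι c₀ hzg
          rw [hcolu]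
          unfold forbOf
          apply Finset.mem_union_left
          apply Finset.mem_union_left
          apply Finset.mem_image.mpr
          have hΔmem : Δ ∈ (Finset.Icc 2 (t+1)).filter (fun Δ => Δ ≤ mv) := by
            rw [Finset.mem_filter, Finset.mem_Icc]
            exact ⟨⟨hΔ2, hΔle⟩, by omega⟩
          refine ⟨⟨Δ, hΔmem⟩, Finset.mem_attach _ _, ?_⟩
          congr 1
          show mv - Δ = mu
          omega
      · -- same block
        have hmeq : mu = mv := by omega
        rw [← hmeq] at hAv
        have hlevdiff : lv - lu ≤ k - 1 := by omega
        have hglt : g < lu := by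
          by_contra hcon
          have hgeq : g = lu := by omega
          omega
        have hglt2 : g < lv := by omega
        have hne1 : anc hc r u (lu - g - 1) ≠ anc hc r v (lv - g - 1) := by
          have h9 : lu - (g+1) = lu - g - 1 := by omega
          have h10 : lv - (g+1) = lv - g - 1 := by omega
          rw [← h9, ← h10]
          have := mlev_max hc ha r (u := u) (v := v) (g' := g + 1)
            (by omega : mlev hc r u v < g + 1)
            (by rw [← hlu, ← hlv]; omega)
          rw [← hlu, ← hlv] at this
          exact this
        have hlevu₁ : G.dist r (anc hc r u (lu - g - 1)) = g + 1 := by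
          have h11 := lev_anc hc ha r (v := u) (j := lu - g - 1) (by rw [← hlu]; omega)
          rw [← hlu] at h11
          omega
        have hlevv₁ : G.dist r (anc hc r v (lv - g - 1)) = g + 1 := by
          have h11 := lev_anc hc ha r (v := v) (j := lv - g - 1) (by rw [← hlv]; omega)
          rw [← hlv] at h11
          omega
        have hu₁r : anc hc r u (lu - g - 1) ≠ r := by
          intro h; rw [h, SimpleGraph.dist_self] at hlevu₁; omega
        have hv₁r : anc hc r v (lv - g - 1) ≠ r := by
          intro h; rw [h, SimpleGraph.dist_self] at hlevv₁; omega
        have hparu₁ : par hc r (anc hc r u (lu - g - 1)) = anc hc r u (lu - g) := by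
          rw [← anc_succ']
          congr 1
          omega
        have hparv₁ : par hc r (anc hc r v (lv - g - 1)) = anc hc r v (lv - g) := by
          rw [← anc_succ']
          congr 1
          omega
        have hpareq : par hc r (anc hc r u (lu - g - 1))
            = par hc r (anc hc r v (lv - g - 1)) := by
          rw [hparu₁, hparv₁]
          have := mlev_spec hc ha r u v
          rw [← hlu, ← hlv, ← hg] at this
          exact this
        have hroot : par hc r (anc hc r u (lu - g - 1)) = r →
            (anc hc r u (lu - g - 1) ≠ c₀ ∧ anc hc r v (lv - g - 1) ≠ c₀) := by
          intro hw
          have hg0 : g = 0 := by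
            have h12 := lev_anc hc ha r (v := u) (j := lu - g) (by rw [← hlu]; omega)
            rw [← hparu₁, hw, SimpleGraph.dist_self, ← hlu] at h12
            omega
          have hlus : lu = s ∧ lv = s := by omega
          constructor
          · intro hcc
            apply hdu.2
            refine ⟨by rw [← hlu]; omega, ?_⟩
            rw [← hcc]
            congr 1
            omega
          · intro hcc
            apply hdv.2
            refine ⟨by rw [← hlv]; omega, ?_⟩
            rw [← hcc]
            congr 1
            omega
        have hlab : lab hc r Q hQ ι c₀ (anc hc r u (lu - g - 1))
            ≠ lab hc r Q hQ ι c₀ (anc hc r v (lv - g - 1)) :=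
          lab_ne hc ha r Q hQ ι c₀ hc₀ hu₁r hv₁r hne1 hpareq hroot
        have hpstar1 : k * mu ≤ g + s := by omega
        have hpstar2 : g + s ≤ k * mu + (k - 1) := by omega
        obtain ⟨pstar, hpstardef⟩ : ∃ n, n = g + s - k * mu := ⟨_, rfl⟩
        have hpk : pstar < k := by omega
        have hforb : forbOf Q k s t N hNpos mu (alab hc r Q hQ ι c₀ u)
            = forbOf Q k s t N hNpos mu (alab hc r Q hQ ι c₀ v) := by
          apply forb_read
          intro z hz
          apply alab_eq_of_le_meet hc ha r Q hQ ι c₀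
          rw [← hg]
          omega
        have hwne : wrd Q k s mu (alab hc r Q hQ ι c₀ u)
            ≠ wrd Q k s mu (alab hc r Q hQ ι c₀ v) := by
          intro hweq
          have hweq2 := congrFun hweq ⟨pstar, hpk⟩
          unfold wrd at hweq2
          have hcoe : (((⟨pstar, hpk⟩ : Fin k) : ℕ) : ℤ) = (pstar : ℤ) := rfl
          have hzval : ((k * mu : ℕ) : ℤ) - (s:ℤ) + 1 + (((⟨pstar, hpk⟩ : Fin k) : ℕ) : ℤ)
              = ((g : ℕ) : ℤ) + 1 := by
            rw [hcoe]
            omega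
          rw [hzval] at hweq2
          have hgc1 : (1:ℤ) ≤ ((g : ℕ) : ℤ) + 1 := by omega
          have hgc2u : ((g : ℕ) : ℤ) + 1 ≤ (G.dist r u : ℤ) := by rw [← hlu]; omega
          have hgc2v : ((g : ℕ) : ℤ) + 1 ≤ (G.dist r v : ℤ) := by rw [← hlv]; omega
          have halabu : alab hc r Q hQ ι c₀ u (((g:ℕ):ℤ)+1)
              = lab hc r Q hQ ι c₀ (anc hc r u (lu - g - 1)) := by
            unfold alab
            rw [dif_pos ⟨hgc1, hgc2u⟩]
            congr 2
            rw [← hlu]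
            omega
          have halabv : alab hc r Q hQ ι c₀ v (((g:ℕ):ℤ)+1)
              = lab hc r Q hQ ι c₀ (anc hc r v (lv - g - 1)) := by
            unfold alab
            rw [dif_pos ⟨hgc1, hgc2v⟩]
            congr 2
            rw [← hlv]
            omega
          rw [halabu, halabv] at hweq2
          exact hlab hweq2
        rw [hmeq] at hforb hwne ⊢
        rw [col_eq, col_eq, hforb]
        exact pick_inj Q k N hNpos
          (forb_card Q k s t N hNpos hN mv (alab hc r Q hQ ι c₀ v)) hwne
    · -- u deep, v not deep
      have h1 : colr hc r Q k s t N hQ hNpos ι c₀ v = ⟨0, hNpos⟩ := by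
        rw [colr, if_neg hdv]
      have h2 := hcolr_deep u hdu
      rw [h1, h2]
      exact col_ne_zero Q k s t N hNpos hN _ _
  · by_cases hdv : deep hc r s c₀ v
    · have h1 : colr hc r Q k s t N hQ hNpos ι c₀ u = ⟨0, hNpos⟩ := by
        rw [colr, if_neg hdu]
      have h2 := hcolr_deep v hdv
      rw [h1, h2]
      exact (col_ne_zero Q k s t N hNpos hN _ _).symm
    · -- both shallow : impossible
      exfalso
      have hus : lu ≤ s := by rw [hlu]; exact hshallow u hdu
      have hvs : lv ≤ s := by rw [hlv]; exact hshallow v hdv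
      have hlus : lu = s := by omega
      have hlvs : lv = s := by omega
      have hg0 : g = 0 := by omega
      have hu0 : anc hc r u (s-1) = c₀ := by
        by_contra hcc
        exact hdu ⟨by rw [← hlu]; omega, fun hpair => hcc hpair.2⟩
      have hv0 : anc hc r v (s-1) = c₀ := by
        by_contra hcc
        exact hdv ⟨by rw [← hlv]; omega, fun hpair => hcc hpair.2⟩
      have hdiv := mlev_max hc ha r (u := u) (v := v) (g' := 1)
        (by rw [← hg]; omega) (by rw [← hlu, ← hlv]; omega)
      apply hdiv
      rw [← hlu, ← hlv]
      rw [show lu - 1 = s - 1 by omega, show lv - 1 = s - 1 by omega, hu0, hv0]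

include ha in
lemma main_valid (hc₀ : G.Adj r c₀) (hk : 1 ≤ k) (hs1 : 1 ≤ s) (hkd : k < 2*s)
    (ht1 : k*t ≤ 2*s) (ht2 : 2*s < k*t + k) (hN : Q ^ k + Q ^ (k/2) + t + 1 = N)
    {u v : V} (hne : u ≠ v) (hdist : G.dist u v = 2*s) :
    colr hc r Q k s t N hQ hNpos ι c₀ u ≠ colr hc r Q k s t N hQ hNpos ι c₀ v := by
  rcases le_total (G.dist r u) (G.dist r v) with hlev | hlev
  · exact main_core hc ha r Q k s t N hQ hNpos ι c₀ hc₀ hk hs1 hkd ht1 ht2 hN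
      hne hdist hlev
  · exact (main_core hc ha r Q k s t N hQ hNpos ι c₀ hc₀ hk hs1 hkd ht1 ht2 hN
      hne.symm (by rw [SimpleGraph.dist_comm]; exact hdist) hlev).symm

end Construction

end ExactDistProof

/-- For `q ≥ 3`, even `d`, and `k ≥ 1` with `k(q-1)^(k-1) ≤ d`, we have
`χ(T_q, d) ≤ (q-1)^k + (q-1)^⌊k/2⌋ + d/k + 1` for the infinite `q`-regular
tree `T_q` (here `d/k` is the floor of the rational `d/k`, so this is
equivalent to the real-valued bound since `χ` is an integer). -/
theorem exactPower_regular_tree_colorable {V : Type*}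
    (G : SimpleGraph V) (q d k : ℕ) (hq : 3 ≤ q)
    (htree : G.IsTree) (hreg : ∀ v : V, (G.neighborSet v).ncard = q)
    (hd : Even d) (hk : 1 ≤ k) (hkd : k * (q - 1) ^ (k - 1) ≤ d) :
    (exactDistGraph G d).Colorable ((q - 1) ^ k + (q - 1) ^ (k / 2) + d / k + 1) := by
  classical
  obtain ⟨Q, rfl⟩ : ∃ Q, q = Q + 1 := ⟨q - 1, by omega⟩
  have hQ1 : (Q + 1) - 1 = Q := by omega
  rw [hQ1]
  rw [hQ1] at hkd
  have hc := htree.isConnected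
  have ha := htree.IsAcyclic
  have hQ : 0 < Q := by omega
  have hV : Nonempty V := hc.nonempty
  have r : V := Classical.choice hV
  have hfin : ∀ x : V, (G.neighborSet x).Finite := fun x =>
    Set.finite_of_ncard_ne_zero (by rw [hreg]; omega)
  have hex : ∀ x : V, Nonempty ((G.neighborSet x) ≃ Fin (Q+1)) := by
    intro x
    letI := (hfin x).fintype
    have h1 : Fintype.card (G.neighborSet x) = Q + 1 := by
      have h2 := hreg x
      rwa [Set.ncard_eq_toFinset_card', Set.toFinset_card] at h2
    exact ⟨Fintype.equivFinOfCardEq h1⟩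
  have ι : ∀ x : V, (G.neighborSet x) ≃ Fin (Q+1) := fun x => (hex x).some
  obtain ⟨c₀, hc₀⟩ : (G.neighborSet r).Nonempty :=
    ⟨((ι r).symm ⟨0, by omega⟩).1, ((ι r).symm ⟨0, by omega⟩).2⟩
  obtain ⟨s, hs⟩ := hd
  have hpow1 : 1 ≤ Q ^ (k-1) := Nat.one_le_pow _ _ (by omega)
  have hd1 : 1 ≤ d := by
    have h2 : 1 * 1 ≤ k * Q ^ (k-1) := Nat.mul_le_mul hk hpow1
    omega
  have hs1 : 1 ≤ s := by omega
  have hkd' : k < d := by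
    rcases Nat.lt_or_ge k 2 with h1 | h1
    · omega
    · have h2 : 2 ≤ Q ^ (k-1) := by
        calc 2 = 2^1 := rfl
        _ ≤ 2^(k-1) := Nat.pow_le_pow_right (by omega) (by omega)
        _ ≤ Q^(k-1) := Nat.pow_le_pow_left (by omega) _
      have h3 : k * 2 ≤ k * Q^(k-1) := Nat.mul_le_mul_left _ h2
      omega
  have htdm : k * (d / k) + d % k = d := Nat.div_add_mod d k
  have htm : d % k < k := Nat.mod_lt _ (by omega)
  refine ⟨SimpleGraph.Coloring.mk
    (fun w => ExactDistProof.colr hc r Q k s (d / k)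
      (Q ^ k + Q ^ (k / 2) + d / k + 1) hQ (Nat.succ_pos _) ι c₀ w) ?_⟩
  intro x y hxy
  obtain ⟨hne, hdxy⟩ := hxy
  exact ExactDistProof.main_valid hc ha r Q k s (d / k)
    (Q ^ k + Q ^ (k / 2) + d / k + 1) hQ (Nat.succ_pos _) ι c₀ hc₀ hk hs1 (by omega)
    (by omega) (by omega) rfl hne (by rw [hdxy]; omega)
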